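/- Assume (C1) and that there exist φ₁, ψ₁ ∈ H_sm with L(φ₁, ψ₁) = λ₀ := sup{L(u,v) : u, v ∈ H}, σ²_X(φ₁) > 0 and σ²_Y(ψ₁) > 0. Then λ_τ := sup{L_τ(u,v) : u, v ∈ H_sm, u ≠ 0, v ≠ 0} converges to λ₀ as τ → 0⁺. -/
import Mathlib


open Filter
open scoped RealInnerProductSpace Topology

namespace RSCCA

variable {H : Type*} [NormedAddCommGroup H] [InnerProductSpace ℝ H]

/-- The scale functional `σ²(u) = ⟪u, G u⟫` associated with a diagonal block `G`. -/
noncomputable def sigSq (G : H →L[ℝ] H) (u : H) : ℝ := ⟪u, G u⟫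

/-- The co-association functional `γ(u,v) = ⟪u, G12 v⟫`. -/
noncomputable def gam (G12 : H →L[ℝ] H) (u v : H) : ℝ := ⟪u, G12 v⟫

/-- The squared association `L(u,v) = γ(u,v)²/(σ²_X(u) σ²_Y(v))`.  In `ℝ`, division by `0`
equals `0`, which matches the convention `L(u,v) = 0` whenever `σ²_X(u) = 0` or
`σ²_Y(v) = 0` (the factors are nonnegative under (C1)). -/
noncomputable def Lfun (G11 G12 G22 : H →L[ℝ] H) (u v : H) : ℝ :=
  gam G12 u v ^ 2 / (sigSq G11 u * sigSq G22 v)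

/-- `λ₀ = sup {L(u,v) : u, v ∈ H}`. -/
noncomputable def lam0 (G11 G12 G22 : H →L[ℝ] H) : ℝ :=
  sSup {x : ℝ | ∃ u v : H, x = Lfun G11 G12 G22 u v}

/-- `L^X(u₁,u₂)` (and `L^Y`, by using the block `Γ₂₂`). -/
noncomputable def LXfun (G : H →L[ℝ] H) (u₁ u₂ : H) : ℝ :=
  ⟪u₁, G u₂⟫ ^ 2 / (⟪u₁, G u₁⟫ * ⟪u₂, G u₂⟫)

/-- (C1): `G11, G12, G21, G22` are the blocks of a self-adjoint, positive semidefinite,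
compact bounded linear operator on `H × H` (stated blockwise, which is equivalent). -/
structure C1 (G11 G12 G21 G22 : H →L[ℝ] H) : Prop where
  sa11 : ∀ u v : H, ⟪G11 u, v⟫ = ⟪u, G11 v⟫
  sa22 : ∀ u v : H, ⟪G22 u, v⟫ = ⟪u, G22 v⟫
  adj : ∀ u v : H, ⟪u, G12 v⟫ = ⟪G21 u, v⟫
  pos : ∀ u v : H, 0 ≤ ⟪u, G11 u⟫ + 2 * ⟪u, G12 v⟫ + ⟪v, G22 v⟫
  cpt11 : IsCompactOperator (⇑G11)
  cpt12 : IsCompactOperator (⇑G12)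
  cpt21 : IsCompactOperator (⇑G21)
  cpt22 : IsCompactOperator (⇑G22)

/-- The penalty functional `Ψ(u) = ‖D u‖²` on the smooth subspace. -/
noncomputable def Psi {Hsm : Submodule ℝ H} (D : Hsm →ₗ[ℝ] H) (u : Hsm) : ℝ := ‖D u‖ ^ 2

/-- The penalized association `L_τ(u,v)` on the smooth subspace. -/
noncomputable def Lpen (G11 G12 G22 : H →L[ℝ] H) {Hsm : Submodule ℝ H} (D : Hsm →ₗ[ℝ] H)
    (τ : ℝ) (u v : Hsm) : ℝ :=
  gam G12 (u : H) (v : H) ^ 2 /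
    ((sigSq G11 (u : H) + τ * Psi D u) * (sigSq G22 (v : H) + τ * Psi D v))

/-- (C2): existence of first canonical directions `φ₁, ψ₁`, maximality, spectral gap and
uniqueness up to sign. -/
structure C2 (G11 G12 G22 : H →L[ℝ] H) {Hsm : Submodule ℝ H} (φ₁ ψ₁ : Hsm) (ρ₀ : ℝ) :
    Prop where
  norm_phi : ‖(φ₁ : H)‖ = 1
  norm_psi : ‖(ψ₁ : H)‖ = 1
  rho_pos : 0 < ρ₀
  max_val : Lfun G11 G12 G22 (φ₁ : H) (ψ₁ : H) = ρ₀ ^ 2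
  le_max : ∀ u v : H, Lfun G11 G12 G22 u v ≤ ρ₀ ^ 2
  gap : ∃ ρ₁ : ℝ, 0 ≤ ρ₁ ∧ ρ₁ < ρ₀ ∧ ∀ u v : H,
    ⟪u, G11 (φ₁ : H)⟫ = 0 → ⟪v, G22 (ψ₁ : H)⟫ = 0 → Lfun G11 G12 G22 u v ≤ ρ₁
  unique : ∀ φ ψ : Hsm, ‖(φ : H)‖ = 1 → ‖(ψ : H)‖ = 1 →
    Lfun G11 G12 G22 (φ : H) (ψ : H) = ρ₀ ^ 2 → (φ = φ₁ ∧ ψ = ψ₁) ∨ (φ = -φ₁ ∧ ψ = -ψ₁)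

/-- (C3a). -/
def C3a (G11 G22 : H →L[ℝ] H) {Hsm : Submodule ℝ H} (D : Hsm →ₗ[ℝ] H) : Prop :=
  ∀ u : Hsm, u ≠ 0 → Psi D u = 0 → 0 < sigSq G11 (u : H) ∧ 0 < sigSq G22 (u : H)

/-- (C3b): the null space `N` of `Ψ` is finite dimensional and `Ψ` dominates `d ‖·‖²`
on `H_sm ∩ N^⊥`. -/
def C3b {Hsm : Submodule ℝ H} (D : Hsm →ₗ[ℝ] H) : Prop :=
  FiniteDimensional ℝ (LinearMap.ker D) ∧
    ∃ d : ℝ, 0 < d ∧ ∀ u : Hsm, u ≠ 0 →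
      (u : H) ∈ ((LinearMap.ker D).map Hsm.subtype)ᗮ → d * ‖(u : H)‖ ^ 2 < Psi D u

/-- Sample setup: nonnegativity and (bi)homogeneity of the sample scale and
co-association functionals. -/
structure SampleSetup {Hsm : Submodule ℝ H} (sX sY : Hsm → ℝ) (g : Hsm → Hsm → ℝ) :
    Prop where
  sX_nonneg : ∀ u, 0 ≤ sX u
  sY_nonneg : ∀ v, 0 ≤ sY v
  sX_homog : ∀ (a : ℝ) (u), sX (a • u) = a ^ 2 * sX u
  sY_homog : ∀ (a : ℝ) (v), sY (a • v) = a ^ 2 * sY v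
  g_homog : ∀ (a b : ℝ) (u v), g (a • u) (b • v) = a * b * g u v

/-- The empirical penalized association `L̂_τ(u,v)`. -/
noncomputable def Lhat {Hsm : Submodule ℝ H} (D : Hsm →ₗ[ℝ] H) (sX sY : Hsm → ℝ)
    (g : Hsm → Hsm → ℝ) (τ : ℝ) (u v : Hsm) : ℝ :=
  g u v ^ 2 / ((sX u + τ * Psi D u) * (sY v + τ * Psi D v))

/-- `C_{n,X}` (resp. `C_{n,Y}` taking `G = Γ₂₂`, `s = s²_{n,Y}`): the supremum of
`|s²_n(u) − σ²(u)|` over `u ∈ H_sm` with `‖u‖²_{τ} = σ²(u) + τΨ(u) = 1`. -/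
noncomputable def Cerr (G : H →L[ℝ] H) {Hsm : Submodule ℝ H} (D : Hsm →ₗ[ℝ] H)
    (s : Hsm → ℝ) (τ : ℝ) : ℝ :=
  sSup {x : ℝ | ∃ u : Hsm, sigSq G (u : H) + τ * Psi D u = 1 ∧ x = |s u - sigSq G (u : H)|}

/-- `C_{n,XY}`. -/
noncomputable def CerrXY (G11 G12 G22 : H →L[ℝ] H) {Hsm : Submodule ℝ H}
    (D : Hsm →ₗ[ℝ] H) (g : Hsm → Hsm → ℝ) (τ : ℝ) : ℝ :=
  sSup {x : ℝ | ∃ u v : Hsm, sigSq G11 (u : H) + τ * Psi D u = 1 ∧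
    sigSq G22 (v : H) + τ * Psi D v = 1 ∧ x = |g u v - gam G12 (u : H) (v : H)|}

/-- (C4a). -/
def C4a (G11 G12 G22 : H →L[ℝ] H) {Hsm : Submodule ℝ H} (D : Hsm →ₗ[ℝ] H)
    (sX sY : ℕ → Hsm → ℝ) (g : ℕ → Hsm → Hsm → ℝ) (τ : ℕ → ℝ) : Prop :=
  (∀ n, 0 ≤ τ n) ∧ Tendsto τ atTop (𝓝 0) ∧
    Tendsto (fun n => Cerr G11 D (sX n) (τ n)) atTop (𝓝 0) ∧
    Tendsto (fun n => Cerr G22 D (sY n) (τ n)) atTop (𝓝 0) ∧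
    Tendsto (fun n => CerrXY G11 G12 G22 D (g n) (τ n)) atTop (𝓝 0) ∧
    ∃ A : ℝ, 0 < A ∧ ∀ (n : ℕ) (u v : Hsm), u ≠ 0 → v ≠ 0 →
      Lhat D (sX n) (sY n) (g n) (τ n) u v ≤ A

/-- (C4b). -/
def C4b (G11 G12 G22 : H →L[ℝ] H) {Hsm : Submodule ℝ H} (D : Hsm →ₗ[ℝ] H)
    (sX sY : ℕ → Hsm → ℝ) (g : ℕ → Hsm → Hsm → ℝ) (τ : ℕ → ℝ) : Prop :=
  (∀ n, 0 ≤ τ n) ∧ Tendsto τ atTop (𝓝 0) ∧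
    Tendsto (fun n => Cerr G11 D (sX n) (τ n)) atTop (𝓝 0) ∧
    Tendsto (fun n => Cerr G22 D (sY n) (τ n)) atTop (𝓝 0) ∧
    ∃ (r : ℕ → Hsm → Hsm → ℝ) (ρXY : H → H → ℝ),
      (∀ n u v, |r n u v| ≤ 1) ∧ (∀ u v, |ρXY u v| ≤ 1) ∧
      (∀ n u v, g n u v = r n u v * Real.sqrt (sX n u) * Real.sqrt (sY n v)) ∧
      (∀ u v : H, gam G12 u v = ρXY u v * Real.sqrt (sigSq G11 u) * Real.sqrt (sigSq G22 v)) ∧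
      Tendsto (fun n => sSup {x : ℝ | ∃ u v : Hsm, ‖(u : H)‖ = 1 ∧ ‖(v : H)‖ = 1 ∧
        x = |r n u v - ρXY (u : H) (v : H)|}) atTop (𝓝 0)

/-- The sieve space `H_d`, spanned by the first `d` basis elements. -/
def Hd (ξ : ℕ → H) (d : ℕ) : Submodule ℝ H := Submodule.span ℝ (ξ '' Set.Iio d)

/-- The orthogonal projection `Π_{H_d} u`, as an element of `H_sm`
(each basis element lies in `H_sm`). -/
noncomputable def projSm {Hsm : Submodule ℝ H} (ξ : ℕ → H) (hξ : ∀ i, ξ i ∈ Hsm)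
    (d : ℕ) (u : H) : Hsm :=
  ∑ i ∈ Finset.range d, ⟪ξ i, u⟫ • (⟨ξ i, hξ i⟩ : Hsm)

/-- Sieve setup: `ξ` is an orthonormal basis of `H` whose elements are smooth, and
`d_n → ∞`. -/
structure SieveSetup (Hsm : Submodule ℝ H) (ξ : ℕ → H) (dn : ℕ → ℕ) : Prop where
  orth : Orthonormal ℝ ξ
  total : (Submodule.span ℝ (Set.range ξ)).topologicalClosure = ⊤
  mem : ∀ i, ξ i ∈ Hsm
  dn_tendsto : Tendsto dn atTop atTop

/-- `D_{n,X}` (resp. `D_{n,Y}`). -/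
noncomputable def Derr (G : H →L[ℝ] H) {Hsm : Submodule ℝ H} (D : Hsm →ₗ[ℝ] H)
    (ξ : ℕ → H) (d : ℕ) (s : Hsm → ℝ) (τ : ℝ) : ℝ :=
  sSup {x : ℝ | ∃ u : Hsm, (u : H) ∈ Hd ξ d ∧ sigSq G (u : H) + τ * Psi D u = 1 ∧
    x = |s u - sigSq G (u : H)|}

/-- `D_{n,XY}`. -/
noncomputable def DerrXY (G11 G12 G22 : H →L[ℝ] H) {Hsm : Submodule ℝ H}
    (D : Hsm →ₗ[ℝ] H) (ξ : ℕ → H) (d : ℕ) (g : Hsm → Hsm → ℝ) (τ : ℝ) : ℝ :=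
  sSup {x : ℝ | ∃ u v : Hsm, (u : H) ∈ Hd ξ d ∧ (v : H) ∈ Hd ξ d ∧
    sigSq G11 (u : H) + τ * Psi D u = 1 ∧ sigSq G22 (v : H) + τ * Psi D v = 1 ∧
    x = |g u v - gam G12 (u : H) (v : H)|}

/-- (C5a). -/
def C5a (G11 G12 G22 : H →L[ℝ] H) {Hsm : Submodule ℝ H} (D : Hsm →ₗ[ℝ] H)
    (ξ : ℕ → H) (dn : ℕ → ℕ) (sX sY : ℕ → Hsm → ℝ) (g : ℕ → Hsm → Hsm → ℝ)
    (τ : ℕ → ℝ) : Prop :=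
  (∀ n, 0 ≤ τ n) ∧ Tendsto τ atTop (𝓝 0) ∧
    Tendsto (fun n => Derr G11 D ξ (dn n) (sX n) (τ n)) atTop (𝓝 0) ∧
    Tendsto (fun n => Derr G22 D ξ (dn n) (sY n) (τ n)) atTop (𝓝 0) ∧
    Tendsto (fun n => DerrXY G11 G12 G22 D ξ (dn n) (g n) (τ n)) atTop (𝓝 0) ∧
    ∃ A : ℝ, 0 < A ∧ ∀ (n : ℕ) (u v : Hsm), u ≠ 0 → v ≠ 0 →
      Lhat D (sX n) (sY n) (g n) (τ n) u v ≤ A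

/-- (C5b). -/
def C5b (G11 G12 G22 : H →L[ℝ] H) {Hsm : Submodule ℝ H} (D : Hsm →ₗ[ℝ] H)
    (ξ : ℕ → H) (dn : ℕ → ℕ) (sX sY : ℕ → Hsm → ℝ) (g : ℕ → Hsm → Hsm → ℝ)
    (τ : ℕ → ℝ) : Prop :=
  (∀ n, 0 ≤ τ n) ∧ Tendsto τ atTop (𝓝 0) ∧
    Tendsto (fun n => Derr G11 D ξ (dn n) (sX n) (τ n)) atTop (𝓝 0) ∧
    Tendsto (fun n => Derr G22 D ξ (dn n) (sY n) (τ n)) atTop (𝓝 0) ∧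
    ∃ (r : ℕ → Hsm → Hsm → ℝ) (ρXY : H → H → ℝ),
      (∀ n u v, |r n u v| ≤ 1) ∧ (∀ u v, |ρXY u v| ≤ 1) ∧
      (∀ n u v, g n u v = r n u v * Real.sqrt (sX n u) * Real.sqrt (sY n v)) ∧
      (∀ u v : H, gam G12 u v = ρXY u v * Real.sqrt (sigSq G11 u) * Real.sqrt (sigSq G22 v)) ∧
      Tendsto (fun n => sSup {x : ℝ | ∃ u v : Hsm, (u : H) ∈ Hd ξ (dn n) ∧
        (v : H) ∈ Hd ξ (dn n) ∧ sigSq G11 (u : H) + τ n * Psi D u = 1 ∧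
        sigSq G22 (v : H) + τ n * Psi D v = 1 ∧
        x = |r n u v - ρXY (u : H) (v : H)|}) atTop (𝓝 0)

/-- `ζ_n` (resp. `ν_n` with `G = Γ₂₂`): sup over unit vectors of `H_sm`. -/
noncomputable def zeta (G : H →L[ℝ] H) {Hsm : Submodule ℝ H} (s : Hsm → ℝ) : ℝ :=
  sSup {x : ℝ | ∃ u : Hsm, ‖(u : H)‖ = 1 ∧ x = |s u - sigSq G (u : H)|}

/-- `η_n`. -/
noncomputable def eta (G12 : H →L[ℝ] H) {Hsm : Submodule ℝ H} (g : Hsm → Hsm → ℝ) : ℝ :=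
  sSup {x : ℝ | ∃ u v : Hsm, ‖(u : H)‖ = 1 ∧ ‖(v : H)‖ = 1 ∧
    x = |g u v - gam G12 (u : H) (v : H)|}

/-- `ℓᵢ(τ) = inf {⟪u, Γᵢᵢ u⟫ + τ Ψ(u) : u ∈ H_sm, ‖u‖ = 1}`. -/
noncomputable def ell (G : H →L[ℝ] H) {Hsm : Submodule ℝ H} (D : Hsm →ₗ[ℝ] H)
    (τ : ℝ) : ℝ :=
  sInf {x : ℝ | ∃ u : Hsm, ‖(u : H)‖ = 1 ∧ x = sigSq G (u : H) + τ * Psi D u}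


lemma sig11_nonneg (G11 G12 G21 G22 : H →L[ℝ] H) (h : C1 G11 G12 G21 G22) (u : H) :
    0 ≤ sigSq G11 u := by
  have := h.pos u 0
  simpa [sigSq] using this

lemma sig22_nonneg (G11 G12 G21 G22 : H →L[ℝ] H) (h : C1 G11 G12 G21 G22) (v : H) :
    0 ≤ sigSq G22 v := by
  have := h.pos 0 v
  simpa [sigSq] using this

lemma cs_ineq (G11 G12 G21 G22 : H →L[ℝ] H) (h : C1 G11 G12 G21 G22) (u v : H) :
    gam G12 u v ^ 2 ≤ sigSq G11 u * sigSq G22 v := by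
  have hq : ∀ t : ℝ, 0 ≤ sigSq G11 u * (t * t) + (2 * gam G12 u v) * t + sigSq G22 v := by
    intro t
    have hp := h.pos (t • u) v
    have h1 : ⟪t • u, G11 (t • u)⟫ = t ^ 2 * ⟪u, G11 u⟫ := by
      rw [map_smul, real_inner_smul_left, real_inner_smul_right]; ring
    have h2 : ⟪t • u, G12 v⟫ = t * ⟪u, G12 v⟫ := real_inner_smul_left _ _ _
    rw [h1, h2] at hp
    simp only [sigSq, gam]
    nlinarith [hp]
  have hd := discrim_le_zero hq
  unfold discrim at hd
  nlinarith [hd]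

lemma Lfun_le_one (G11 G12 G21 G22 : H →L[ℝ] H) (h : C1 G11 G12 G21 G22) (u v : H) :
    Lfun G11 G12 G22 u v ≤ 1 := by
  have hnn : 0 ≤ sigSq G11 u * sigSq G22 v :=
    mul_nonneg (sig11_nonneg _ _ _ _ h u) (sig22_nonneg _ _ _ _ h v)
  rcases eq_or_lt_of_le hnn with h0 | h0
  · rw [Lfun, ← h0, div_zero]; exact zero_le_one
  · exact (div_le_one h0).2 (cs_ineq _ _ _ _ h u v)

lemma Psi_nonneg {Hsm : Submodule ℝ H} (D : Hsm →ₗ[ℝ] H) (u : Hsm) : 0 ≤ Psi D u :=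
  sq_nonneg _

lemma Lpen_le_Lfun (G11 G12 G21 G22 : H →L[ℝ] H) (h : C1 G11 G12 G21 G22)
    {Hsm : Submodule ℝ H} (D : Hsm →ₗ[ℝ] H) {τ : ℝ} (hτ : 0 ≤ τ) (u v : Hsm) :
    Lpen G11 G12 G22 D τ u v ≤ Lfun G11 G12 G22 (u : H) (v : H) := by
  have hXu := sig11_nonneg _ _ _ _ h (u : H)
  have hYv := sig22_nonneg _ _ _ _ h (v : H)
  have hPu : 0 ≤ τ * Psi D u := mul_nonneg hτ (Psi_nonneg D u)
  have hPv : 0 ≤ τ * Psi D v := mul_nonneg hτ (Psi_nonneg D v)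
  rcases eq_or_lt_of_le (mul_nonneg hXu hYv) with h0 | h0
  · have hg : gam G12 (u : H) (v : H) ^ 2 = 0 :=
      le_antisymm (h0 ▸ cs_ineq _ _ _ _ h (u : H) (v : H)) (sq_nonneg _)
    simp [Lpen, Lfun, hg]
  · rw [Lpen, Lfun]
    exact div_le_div_of_nonneg_left (sq_nonneg _) h0
      (mul_le_mul (by linarith) (by linarith) hYv (by linarith))

/-- under (C1), if `φ₁, ψ₁ ∈ H_sm` attain `λ₀` and have positive scales,
then `λ_τ → λ₀` as `τ → 0⁺`. -/
theorem statement1 [CompleteSpace H] [TopologicalSpace.SeparableSpace H]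
    (G11 G12 G21 G22 : H →L[ℝ] H) {Hsm : Submodule ℝ H} (D : Hsm →ₗ[ℝ] H)
    (hC1 : C1 G11 G12 G21 G22) (φ₁ ψ₁ : Hsm)
    (hmax : Lfun G11 G12 G22 (φ₁ : H) (ψ₁ : H) = lam0 G11 G12 G22)
    (hX : 0 < sigSq G11 (φ₁ : H)) (hY : 0 < sigSq G22 (ψ₁ : H)) :
    Tendsto (fun τ : ℝ => sSup {x : ℝ | ∃ u v : Hsm, u ≠ 0 ∧ v ≠ 0 ∧
        x = Lpen G11 G12 G22 D τ u v}) (𝓝[>] 0) (𝓝 (lam0 G11 G12 G22)) := by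
  have hφ : φ₁ ≠ 0 := by
    intro h; rw [h] at hX; simp [sigSq] at hX
  have hψ : ψ₁ ≠ 0 := by
    intro h; rw [h] at hY; simp [sigSq] at hY
  have hbddS : BddAbove {x : ℝ | ∃ u v : H, x = Lfun G11 G12 G22 u v} := by
    refine ⟨1, ?_⟩
    rintro x ⟨u, v, rfl⟩
    exact Lfun_le_one _ _ _ _ hC1 u v
  have hle_lam0 : ∀ u v : H, Lfun G11 G12 G22 u v ≤ lam0 G11 G12 G22 := fun u v =>
    le_csSup hbddS ⟨u, v, rfl⟩
  have key : ∀ τ : ℝ, 0 < τ →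
      Lpen G11 G12 G22 D τ φ₁ ψ₁ ≤ sSup {x : ℝ | ∃ u v : Hsm, u ≠ 0 ∧ v ≠ 0 ∧
        x = Lpen G11 G12 G22 D τ u v} ∧
      sSup {x : ℝ | ∃ u v : Hsm, u ≠ 0 ∧ v ≠ 0 ∧
        x = Lpen G11 G12 G22 D τ u v} ≤ lam0 G11 G12 G22 := by
    intro τ hτ
    have hbdd : BddAbove {x : ℝ | ∃ u v : Hsm, u ≠ 0 ∧ v ≠ 0 ∧
        x = Lpen G11 G12 G22 D τ u v} := by
      refine ⟨lam0 G11 G12 G22, ?_⟩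
      rintro x ⟨u, v, -, -, rfl⟩
      exact (Lpen_le_Lfun _ _ _ _ hC1 D hτ.le u v).trans (hle_lam0 _ _)
    refine ⟨le_csSup hbdd ⟨φ₁, ψ₁, hφ, hψ, rfl⟩, csSup_le ⟨_, φ₁, ψ₁, hφ, hψ, rfl⟩ ?_⟩
    rintro x ⟨u, v, -, -, rfl⟩
    exact (Lpen_le_Lfun _ _ _ _ hC1 D hτ.le u v).trans (hle_lam0 _ _)
  have ha : sigSq G11 (φ₁ : H) * sigSq G22 (ψ₁ : H) ≠ 0 := (mul_pos hX hY).ne'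
  have hg : Tendsto (fun τ : ℝ => Lpen G11 G12 G22 D τ φ₁ ψ₁) (𝓝[>] 0)
      (𝓝 (lam0 G11 G12 G22)) := by
    have hcont : Continuous (fun τ : ℝ =>
        (sigSq G11 (φ₁ : H) + τ * Psi D φ₁) * (sigSq G22 (ψ₁ : H) + τ * Psi D ψ₁)) := by
      fun_prop
    have h1 : Tendsto (fun τ : ℝ =>
        (sigSq G11 (φ₁ : H) + τ * Psi D φ₁) * (sigSq G22 (ψ₁ : H) + τ * Psi D ψ₁)) (𝓝 0)
        (𝓝 (sigSq G11 (φ₁ : H) * sigSq G22 (ψ₁ : H))) := by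
      have := hcont.tendsto 0
      simpa using this
    have h2 := (tendsto_const_nhds (x := gam G12 (φ₁ : H) (ψ₁ : H) ^ 2)).div h1 ha
    have h3 : gam G12 (φ₁ : H) (ψ₁ : H) ^ 2 /
        (sigSq G11 (φ₁ : H) * sigSq G22 (ψ₁ : H)) = lam0 G11 G12 G22 := hmax
    rw [← h3]
    exact (h2.mono_left nhdsWithin_le_nhds)
  refine tendsto_of_tendsto_of_tendsto_of_le_of_le' hg tendsto_const_nhds ?_ ?_
  · filter_upwards [self_mem_nhdsWithin] with τ hτ
    exact (key τ hτ).1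
  · filter_upwards [self_mem_nhdsWithin] with τ hτ
    exact (key τ hτ).2
end RSCCA
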